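/- Let G be a connected graph, Γ an MD-coloring of G using md(G) colors, and u, v nonadjacent vertices such that exactly one color t separates u and v (i.e., C_Γ(u,v) = {t}). Let G′ = G + uv and extend Γ to Γ′ by coloring the new edge uv with color t. Then Γ′ is an MD-coloring of G′, and md(G′) = md(G). -/

import Mathlib

open SimpleGraph

variable {V : Type*}

/-- Color `i` separates `u` and `v`: there is an edge-cut, all of whose edges
have color `i`, whose removal disconnects `u` from `v`. -/
def separatesColor (G : SimpleGraph V) (Γ : Sym2 V → ℕ) (i : ℕ) (u v : V) : Prop :=
  ∃ F : Set (Sym2 V), F ⊆ G.edgeSet ∧ (∀ e ∈ F, Γ e = i) ∧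
    ¬ ((G.deleteEdges F).Reachable u v)

/-- An MD-coloring: every pair of distinct vertices is separated by a
monochromatic edge-cut. -/
def IsMDColoring (G : SimpleGraph V) (Γ : Sym2 V → ℕ) : Prop :=
  ∀ u v : V, u ≠ v → ∃ i, separatesColor G Γ i u v

/-- The monochromatic disconnection number: the maximum number of colors
used by an MD-coloring. -/
noncomputable def mdNumber (G : SimpleGraph V) : ℕ :=
  sSup {k | ∃ Γ : Sym2 V → ℕ, IsMDColoring G Γ ∧ (Γ '' G.edgeSet).ncard = k}

/-- If `Γ` is an extremal MD-coloring of `G` and `u`, `v` are nonadjacent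
vertices separated by exactly one color `t`, then coloring the extra edge
`uv` with color `t` yields an MD-coloring of `G + uv`, and
`md(G + uv) = md(G)`. -/
theorem stmt_13 [Fintype V] [DecidableEq V] (G : SimpleGraph V) (hG : G.Connected)
    (Γ : Sym2 V → ℕ) (hΓ : IsMDColoring G Γ)
    (hext : (Γ '' G.edgeSet).ncard = mdNumber G)
    (u v : V) (huv : u ≠ v) (hnadj : ¬ G.Adj u v) (t : ℕ)
    (hsep : {i : ℕ | separatesColor G Γ i u v} = {t}) :
    IsMDColoring (G ⊔ SimpleGraph.fromEdgeSet {s(u, v)})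
        (fun e => if e = s(u, v) then t else Γ e) ∧
      mdNumber (G ⊔ SimpleGraph.fromEdgeSet {s(u, v)}) = mdNumber G := by
  classical
  set G' : SimpleGraph V := G ⊔ SimpleGraph.fromEdgeSet {s(u, v)} with hG'
  set Γ' : Sym2 V → ℕ := fun e => if e = s(u, v) then t else Γ e with hΓ'def
  have hGle : G ≤ G' := le_sup_left
  have hsuv_not : s(u, v) ∉ G.edgeSet := fun h => hnadj h
  have hedge' : G'.edgeSet = insert (s(u, v)) G.edgeSet := by
    rw [hG', edgeSet_sup, edgeSet_fromEdgeSet]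
    have : ({s(u, v)} : Set (Sym2 V)) \ {e | e.IsDiag} = {s(u, v)} := by
      ext e
      simp only [Set.mem_diff, Set.mem_singleton_iff, Set.mem_setOf_eq, and_iff_left_iff_imp]
      rintro rfl
      simpa using huv
    rw [Sym2.diagSet_eq_setOfPred_isDiag, this, Set.union_comm, Set.insert_eq]
  -- the key absorption lemma
  have habsorb : ∀ (A : SimpleGraph V) (x y : V), A.Reachable u v →
      (A ⊔ SimpleGraph.fromEdgeSet {s(u, v)}).Reachable x y → A.Reachable x y := by
    intro A x y hA hr
    obtain ⟨p⟩ := hr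
    induction p with
    | nil => exact Reachable.refl _
    | cons h' p ih =>
      rename_i a b c
      refine Reachable.trans ?_ ih
      rcases (sup_adj _ _ _ _).1 h' with h1 | h2
      · exact h1.reachable
      · rw [fromEdgeSet_adj] at h2
        rcases Sym2.eq_iff.1 (Set.mem_singleton_iff.1 h2.1) with ⟨rfl, rfl⟩ | ⟨rfl, rfl⟩
        · exact hA
        · exact hA.symm
  -- extended coloring is MD
  have hMD' : IsMDColoring G' Γ' := by
    intro x y hxy
    obtain ⟨i, F, hF, hcol, hnr⟩ := hΓ x y hxy
    by_cases hr : (G.deleteEdges F).Reachable u v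
    · refine ⟨i, F, hF.trans (edgeSet_mono hGle), ?_, ?_⟩
      · intro e he
        have : e ≠ s(u, v) := fun h => hsuv_not (h ▸ hF he)
        simp only [hΓ'def, if_neg this]
        exact hcol e he
      · intro hreach
        apply hnr
        refine habsorb _ x y hr (hreach.mono ?_)
        intro a b hab
        rw [deleteEdges_adj] at hab
        rcases (sup_adj _ _ _ _).1 hab.1 with h1 | h2
        · exact (sup_adj _ _ _ _).2 (Or.inl ((deleteEdges_adj).2 ⟨h1, hab.2⟩))
        · exact (sup_adj _ _ _ _).2 (Or.inr h2)
    · have hit : i = t := by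
        have : i ∈ {i : ℕ | separatesColor G Γ i u v} := ⟨F, hF, hcol, hr⟩
        rw [hsep] at this
        exact this
      refine ⟨t, F ∪ {s(u, v)}, ?_, ?_, ?_⟩
      · intro e he
        rcases he with he | he
        · exact edgeSet_mono hGle (hF he)
        · rw [hedge']
          exact Set.mem_singleton_iff.1 he ▸ Set.mem_insert _ _
      · intro e he
        rcases he with he | he
        · have hne : e ≠ s(u, v) := fun h => hsuv_not (h ▸ hF he)
          simp only [hΓ'def, if_neg hne]
          exact hit ▸ hcol e he
        · simp only [hΓ'def, Set.mem_singleton_iff.1 he, if_pos rfl]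
      · intro hreach
        apply hnr
        refine hreach.mono ?_
        intro a b hab
        rw [deleteEdges_adj] at hab ⊢
        have hne : s(a, b) ≠ s(u, v) := fun h => hab.2 (Or.inr h)
        rcases (sup_adj _ _ _ _).1 hab.1 with h1 | h2
        · exact ⟨h1, fun h => hab.2 (Or.inl h)⟩
        · rw [fromEdgeSet_adj] at h2
          exact absurd h2.1 hne
  -- restriction: any MD-coloring of G' is an MD-coloring of G
  have hrestr : ∀ Δ : Sym2 V → ℕ, IsMDColoring G' Δ → IsMDColoring G Δ := by
    intro Δ hΔ x y hxy
    obtain ⟨i, F, hF, hcol, hnr⟩ := hΔ x y hxy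
    refine ⟨i, F \ {s(u, v)}, ?_, fun e he => hcol e he.1, ?_⟩
    · intro e he
      have := hF he.1
      rw [hedge'] at this
      rcases this with h | h
      · exact absurd h he.2
      · exact h
    · intro hreach
      apply hnr
      refine hreach.mono ?_
      intro a b hab
      rw [deleteEdges_adj] at hab ⊢
      refine ⟨hGle hab.1, fun h => ?_⟩
      have hne : s(a, b) ≠ s(u, v) := by
        intro h'
        rcases Sym2.eq_iff.1 h' with ⟨rfl, rfl⟩ | ⟨rfl, rfl⟩
        · exact hnadj hab.1
        · exact hnadj hab.1.symm
      exact hab.2 ⟨h, hne⟩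
  -- any MD-coloring of G' uses the color of s(u,v) also on an edge of G
  have hcolsub : ∀ Δ : Sym2 V → ℕ, IsMDColoring G' Δ →
      Δ '' G'.edgeSet ⊆ Δ '' G.edgeSet := by
    intro Δ hΔ c hc
    obtain ⟨e, he, rfl⟩ := hc
    rw [hedge'] at he
    rcases he with rfl | he
    · -- e = s(u,v); use a separating cut for u, v
      obtain ⟨i, F, hF, hcol, hnr⟩ := hΔ u v huv
      have hmem : s(u, v) ∈ F := by
        by_contra h
        apply hnr
        refine Adj.reachable ?_
        rw [deleteEdges_adj]
        exact ⟨(sup_adj _ _ _ _).2 (Or.inr ((fromEdgeSet_adj _).2 ⟨rfl, huv⟩)), h⟩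
      have hie : i = Δ (s(u, v)) := (hcol _ hmem).symm
      by_cases hex : ∃ f ∈ F, f ∈ G.edgeSet
      · obtain ⟨f, hf, hfG⟩ := hex
        exact ⟨f, hfG, (hcol f hf).trans hie⟩
      · exfalso
        apply hnr
        refine (hG.preconnected u v).mono ?_
        intro a b hab
        rw [deleteEdges_adj]
        refine ⟨hGle hab, fun h => ?_⟩
        have : s(a, b) ∈ G'.edgeSet := hF h
        rw [hedge'] at this
        rcases this with h' | h'
        · rcases Sym2.eq_iff.1 h' with ⟨rfl, rfl⟩ | ⟨rfl, rfl⟩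
          · exact hnadj hab
          · exact hnadj hab.symm
        · exact hex ⟨_, h, h'⟩
    · exact ⟨e, he, rfl⟩
  -- t is used on an edge of G
  have ht : t ∈ Γ '' G.edgeSet := by
    have : t ∈ {i : ℕ | separatesColor G Γ i u v} := by rw [hsep]; rfl
    obtain ⟨F, hF, hcol, hnr⟩ := this
    rcases Set.eq_empty_or_nonempty F with rfl | ⟨e, he⟩
    · exact absurd (by simpa using hG.preconnected u v) hnr
    · exact ⟨e, hF he, hcol e he⟩
  -- image of extended coloring
  have himg : Γ' '' G'.edgeSet = Γ '' G.edgeSet := by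
    apply Set.Subset.antisymm
    · rintro c ⟨e, he, rfl⟩
      rw [hedge'] at he
      rcases he with rfl | he
      · simpa [hΓ'def] using ht
      · have hne : e ≠ s(u, v) := fun h => hsuv_not (h ▸ he)
        simp only [hΓ'def, if_neg hne]
        exact ⟨e, he, rfl⟩
    · rintro c ⟨e, he, rfl⟩
      have hne : e ≠ s(u, v) := fun h => hsuv_not (h ▸ he)
      refine ⟨e, ?_, by simp [hΓ'def, if_neg hne]⟩
      rw [hedge']; exact Set.mem_insert_of_mem _ he
  -- boundedness of the defining sets
  have hbdd : ∀ H : SimpleGraph V, BddAbove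
      {k | ∃ Δ : Sym2 V → ℕ, IsMDColoring H Δ ∧ (Δ '' H.edgeSet).ncard = k} := by
    intro H
    refine ⟨Fintype.card (Sym2 V), ?_⟩
    rintro k ⟨Δ, _, rfl⟩
    calc (Δ '' H.edgeSet).ncard ≤ H.edgeSet.ncard := Set.ncard_image_le (Set.toFinite _)
      _ ≤ (Set.univ : Set (Sym2 V)).ncard :=
          Set.ncard_le_ncard (Set.subset_univ _) Set.finite_univ
      _ = Fintype.card (Sym2 V) := by rw [Set.ncard_univ, Nat.card_eq_fintype_card]
  have hmem' : mdNumber G ∈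
      {k | ∃ Δ : Sym2 V → ℕ, IsMDColoring G' Δ ∧ (Δ '' G'.edgeSet).ncard = k} :=
    ⟨Γ', hMD', by rw [himg, hext]⟩
  have heq : mdNumber G' = mdNumber G := by
    apply le_antisymm
    · apply csSup_le ⟨mdNumber G, hmem'⟩
      rintro k ⟨Δ, hΔ, rfl⟩
      have h1 : (Δ '' G'.edgeSet).ncard ≤ (Δ '' G.edgeSet).ncard :=
        Set.ncard_le_ncard (hcolsub Δ hΔ) (Set.toFinite _)
      refine h1.trans (le_csSup (hbdd G) ?_)
      exact ⟨Δ, hrestr Δ hΔ, rfl⟩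
    · exact le_csSup (hbdd G') hmem'
  exact ⟨hMD', heq⟩
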